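/- Let N ∈ ℕ and let ι : ℂ → ℂ^{N×N} be analytic on B(0,R) with power series ι(λ) = Σ_{k≥0} ι_k λ^k, ι_0 invertible. Let z ∈ ℂ with z ≠ 0 and |1/z| < R, let v₁ ∈ ℂ^N, and define w_j = Σ_{k=0}^{j−1} z^{j−1−k}·(ι_k)ᵀ·v₁ for j ≥ 1. Then: (a) w_1 = ι_0ᵀ v₁ and w_{j+1} = z·w_j + (ι_j)ᵀ v₁ for all j ≥ 1; (b) if z^{−j}·w_j → 0 as j → ∞, then (ι(1/z))ᵀ v₁ = 0; (c) if v₁ ≠ 0 then w_1 ≠ 0. -/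
import Mathlib


open Filter

/-- Characterization of kernel elements of the adjoint of the inverse power
operator: for `w_j = Σ_{k=0}^{j−1} z^{j−1−k} ι_kᵀ v₁` one has the recursion
`w_1 = ι₀ᵀ v₁`, `w_{j+1} = z·w_j + ι_jᵀ v₁`; if `z^{−j} w_j → 0` then
`ι(1/z)ᵀ v₁ = 0`; and `w_1 ≠ 0` whenever `v₁ ≠ 0`. -/
theorem adjoint_kernel_characterization
    (N : ℕ) (R : ℝ)
    (ιf : ℂ → Matrix (Fin N) (Fin N) ℂ) (ιc : ℕ → Matrix (Fin N) (Fin N) ℂ)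
    (hser : ∀ w : ℂ, ‖w‖ < R → HasSum (fun k => w ^ k • ιc k) (ιf w))
    (hunit : IsUnit (ιc 0)) (hc0 : ιc 0 = ιf 0)
    (z : ℂ) (hz : z ≠ 0) (hzR : ‖z⁻¹‖ < R) (v₁ : Fin N → ℂ)
    (w : ℕ → Fin N → ℂ)
    (hw : ∀ j : ℕ, w j =
      ∑ k ∈ Finset.range j, z ^ (j - 1 - k) • ((ιc k).transpose).mulVec v₁) :
    (w 1 = ((ιc 0).transpose).mulVec v₁ ∧
      ∀ j : ℕ, 1 ≤ j → w (j + 1) = z • w j + ((ιc j).transpose).mulVec v₁) ∧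
    (Tendsto (fun j : ℕ => z ^ (-(j : ℤ)) • w j) atTop (nhds 0) →
      ((ιf z⁻¹).transpose).mulVec v₁ = 0) ∧
    (v₁ ≠ 0 → w 1 ≠ 0) := by
  refine ⟨⟨by simp [hw], ?_⟩, ?_, ?_⟩
  · intro j hj
    rw [hw (j + 1), hw j, Finset.sum_range_succ, Finset.smul_sum]
    congr 1
    · refine Finset.sum_congr rfl fun k hk => ?_
      rw [Finset.mem_range] at hk
      rw [smul_smul, ← pow_succ']
      congr 2
      omega
    · simp
  · intro htend
    -- the linear map M ↦ Mᵀ *ᵥ v₁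
    set L : Matrix (Fin N) (Fin N) ℂ →ₗ[ℂ] (Fin N → ℂ) :=
      { toFun := fun M => M.transpose.mulVec v₁
        map_add' := by
          intro A B
          simp [Matrix.transpose_add, Matrix.add_mulVec]
        map_smul' := by
          intro c A
          simp [Matrix.transpose_smul, Matrix.smul_mulVec] } with hL
    have hsum : HasSum (fun k : ℕ => (z⁻¹) ^ k • ((ιc k).transpose).mulVec v₁)
        (((ιf z⁻¹).transpose).mulVec v₁) := by
      have := (hser z⁻¹ hzR).mapL (LinearMap.toContinuousLinearMap L)
      simpa [hL, Matrix.smul_mulVec] using this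
    have hps : Tendsto (fun j : ℕ =>
        ∑ k ∈ Finset.range j, (z⁻¹) ^ k • ((ιc k).transpose).mulVec v₁)
        atTop (nhds (((ιf z⁻¹).transpose).mulVec v₁)) := hsum.tendsto_sum_nat
    have heq : ∀ j : ℕ, z • (z ^ (-(j : ℤ)) • w j) =
        ∑ k ∈ Finset.range j, (z⁻¹) ^ k • ((ιc k).transpose).mulVec v₁ := by
      intro j
      rw [hw j, Finset.smul_sum, Finset.smul_sum]
      refine Finset.sum_congr rfl fun k hk => ?_
      rw [Finset.mem_range] at hk
      rw [smul_smul, smul_smul]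
      congr 1
      rw [inv_pow, ← zpow_natCast z (j - 1 - k), ← zpow_natCast z k, ← zpow_neg]
      have h1 : ((j - 1 - k : ℕ) : ℤ) = (j : ℤ) - 1 - k := by omega
      rw [h1]
      have h2 : z * z ^ (-(j : ℤ)) * z ^ ((j : ℤ) - 1 - k) =
          z ^ (1 + -(j : ℤ) + ((j : ℤ) - 1 - k)) := by
        rw [zpow_add₀ hz, zpow_add₀ hz, zpow_one]
      rw [h2]
      congr 1
      ring
    have h0 : Tendsto (fun j : ℕ =>
        ∑ k ∈ Finset.range j, (z⁻¹) ^ k • ((ιc k).transpose).mulVec v₁)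
        atTop (nhds 0) := by
      have := htend.const_smul z
      simp only [smul_zero] at this
      exact Tendsto.congr heq this
    exact tendsto_nhds_unique hps h0
  · intro hv hcontra
    have h1 : ((ιc 0).transpose).mulVec v₁ = 0 := by
      have : w 1 = ((ιc 0).transpose).mulVec v₁ := by simp [hw]
      rw [← this, hcontra]
    have hinj : Function.Injective ((ιc 0).transpose).mulVec :=
      Matrix.mulVec_injective_iff_isUnit.mpr ((Matrix.isUnit_transpose (ιc 0)).mpr hunit)
    apply hv
    have := hinj (a₂ := 0) (by simpa using h1)
    exact this
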